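/- Let a ∈ (0,∞], I = [0,a), let F₁ and F₂ be admissible on I, and let Ω be a convex domain in ℝⁿ (n ≥ 1). Then C_Ω[F₂] ⊆ C_Ω[F₁] if and only if C_ℝ[F₂] ⊆ C_ℝ[F₁] (where ℝ is regarded as a convex domain in ℝ¹), and C_Ω[F₂] ⊊ C_Ω[F₁] if and only if C_ℝ[F₂] ⊊ C_ℝ[F₁]. In particular, the hierarchy of F-concavities is independent of the convex domain Ω and of the dimension n. -/

import Mathlib

open Set Filter
open scoped ENNReal Topology

noncomputable section

/-- The interval `I = [0,a)` for `a ∈ (0,∞]`, as a subset of `ℝ`. -/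
def intervalI (a : ℝ≥0∞) : Set ℝ := {r : ℝ | 0 ≤ r ∧ ENNReal.ofReal r < a}

/-- The interior `(0,a)` of `I = [0,a)`. -/
def intervalI₀ (a : ℝ≥0∞) : Set ℝ := {r : ℝ | 0 < r ∧ ENNReal.ofReal r < a}

/-- `F : I → [-∞,∞)` is admissible on `I = [0,a)`: continuous on `(0,a)`,
strictly increasing on `I`, `F(0) = -∞`, and never `+∞` on `I`. -/
structure IsAdmissible (a : ℝ≥0∞) (F : ℝ → EReal) : Prop where
  continuousOn : ContinuousOn F (intervalI₀ a)
  strictMonoOn : StrictMonoOn F (intervalI a)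
  map_zero : F 0 = ⊥
  lt_top : ∀ r ∈ intervalI a, F r < ⊤

/-- `f` is `F`-concave on `Ω`:
`F(f((1-λ)x+λy)) ≥ (1-λ)F(f(x)) + λF(f(y))` for `x,y ∈ Ω`, `λ ∈ (0,1)`. -/
def FConcaveOn {E : Type*} [AddCommGroup E] [Module ℝ E]
    (F : ℝ → EReal) (Ω : Set E) (f : E → ℝ) : Prop :=
  ∀ x ∈ Ω, ∀ y ∈ Ω, ∀ lam : ℝ, lam ∈ Ioo (0:ℝ) 1 →
    ((1 - lam : ℝ) : EReal) * F (f x) + (lam : EReal) * F (f y)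
      ≤ F (f ((1 - lam) • x + lam • y))

/-- `C_Ω[F]`: the set of `F`-concave functions on `Ω` with values in `I = [0,a)`. -/
def CSet {E : Type*} [AddCommGroup E] [Module ℝ E]
    (a : ℝ≥0∞) (F : ℝ → EReal) (Ω : Set E) : Set (E → ℝ) :=
  {f | MapsTo f Ω (intervalI a) ∧ FConcaveOn F Ω f}

-- ### auxiliary material

/-- The pointwise comparison condition on `F₁, F₂` characterizing inclusion. -/
def StarCond (a : ℝ≥0∞) (F₁ F₂ : ℝ → EReal) : Prop :=
  ∀ s ∈ intervalI₀ a, ∀ t ∈ intervalI₀ a, ∀ u ∈ intervalI₀ a, ∀ lam ∈ Ioo (0:ℝ) 1,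
    F₂ u = ((1 - lam : ℝ) : EReal) * F₂ s + (lam : EReal) * F₂ t →
    ((1 - lam : ℝ) : EReal) * F₁ s + (lam : EReal) * F₁ t ≤ F₁ u

lemma I₀_subset_I (a : ℝ≥0∞) : intervalI₀ a ⊆ intervalI a := fun r hr => ⟨hr.1.le, hr.2⟩

lemma zero_mem_I {a : ℝ≥0∞} (ha : 0 < a) : (0:ℝ) ∈ intervalI a := by
  refine ⟨le_refl _, ?_⟩; simpa using ha

lemma a_pos_of_mem {a : ℝ≥0∞} {s : ℝ} (hs : s ∈ intervalI₀ a) : 0 < a :=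
  lt_of_le_of_lt zero_le hs.2

lemma mem_I₀_of_ne {a : ℝ≥0∞} {s : ℝ} (hs : s ∈ intervalI a) (h : s ≠ 0) :
    s ∈ intervalI₀ a := ⟨lt_of_le_of_ne hs.1 (Ne.symm h), hs.2⟩

lemma F_ne_bot {a : ℝ≥0∞} {F : ℝ → EReal} (hF : IsAdmissible a F) {s : ℝ}
    (hs : s ∈ intervalI₀ a) : F s ≠ ⊥ := by
  have h0 : (0:ℝ) ∈ intervalI a := zero_mem_I (a_pos_of_mem hs)
  have := hF.strictMonoOn h0 (I₀_subset_I a hs) hs.1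
  rw [hF.map_zero] at this
  exact this.ne'

lemma F_ne_top {a : ℝ≥0∞} {F : ℝ → EReal} (hF : IsAdmissible a F) {s : ℝ}
    (hs : s ∈ intervalI₀ a) : F s ≠ ⊤ := (hF.lt_top s (I₀_subset_I a hs)).ne

lemma uIcc_subset_I₀ {a : ℝ≥0∞} {s t : ℝ} (hs : s ∈ intervalI₀ a)
    (ht : t ∈ intervalI₀ a) : uIcc s t ⊆ intervalI₀ a := by
  intro r hr
  rw [mem_uIcc] at hr
  constructor
  · rcases hr with ⟨h1, _⟩ | ⟨h1, _⟩
    · exact lt_of_lt_of_le hs.1 h1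
    · exact lt_of_lt_of_le ht.1 h1
  · rcases hr with ⟨_, h2⟩ | ⟨_, h2⟩
    · exact lt_of_le_of_lt (ENNReal.ofReal_le_ofReal h2) ht.2
    · exact lt_of_le_of_lt (ENNReal.ofReal_le_ofReal h2) hs.2

lemma cast_combo (lam σ τ : ℝ) :
    ((1-lam:ℝ):EReal) * (σ:EReal) + (lam:EReal)*(τ:EReal)
      = (((1-lam)*σ + lam*τ : ℝ):EReal) := by norm_cast

/-- Direction A: the pointwise condition implies inclusion over any convex `Ω`. -/
lemma lemA {E : Type*} [AddCommGroup E] [Module ℝ E] {a : ℝ≥0∞}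
    {F₁ F₂ : ℝ → EReal} (hF₁ : IsAdmissible a F₁) (hF₂ : IsAdmissible a F₂)
    (hstar : StarCond a F₁ F₂) (Ω : Set E) (hconv : Convex ℝ Ω) :
    CSet a F₂ Ω ⊆ CSet a F₁ Ω := by
  rintro f ⟨hmap, hconc⟩
  refine ⟨hmap, ?_⟩
  intro x hx y hy lam hlam
  obtain ⟨hlam0, hlam1⟩ := hlam
  have hxm := hmap hx
  have hym := hmap hy
  have hz : (1 - lam) • x + lam • y ∈ Ω :=
    hconv hx hy (by linarith) hlam0.le (by ring)
  have hzm := hmap hz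
  set s := f x with hs
  set t := f y with ht
  set u := f ((1 - lam) • x + lam • y) with hu
  by_cases hbs : F₁ s = ⊥
  · rw [hbs, EReal.mul_bot_of_pos (by exact_mod_cast (by linarith : (0:ℝ) < 1 - lam)),
      EReal.bot_add]
    exact bot_le
  by_cases hbt : F₁ t = ⊥
  · rw [hbt, EReal.mul_bot_of_pos (by exact_mod_cast hlam0), EReal.add_bot]
    exact bot_le
  -- s, t are in the open interval
  have hs₀ : s ∈ intervalI₀ a := by
    refine mem_I₀_of_ne hxm (fun h => hbs ?_); rw [h, hF₁.map_zero]
  have ht₀ : t ∈ intervalI₀ a := by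
    refine mem_I₀_of_ne hym (fun h => hbt ?_); rw [h, hF₁.map_zero]
  set σ := (F₂ s).toReal with hσdef
  set τ := (F₂ t).toReal with hτdef
  have hσ : (σ : EReal) = F₂ s := EReal.coe_toReal (F_ne_top hF₂ hs₀) (F_ne_bot hF₂ hs₀)
  have hτ : (τ : EReal) = F₂ t := EReal.coe_toReal (F_ne_top hF₂ ht₀) (F_ne_bot hF₂ ht₀)
  set μ := (1 - lam) * σ + lam * τ with hμdef
  have hcomb : ((μ : ℝ) : EReal) ≤ F₂ u := by
    have := hconc x hx y hy lam ⟨hlam0, hlam1⟩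
    rw [← hs, ← ht, ← hu, ← hσ, ← hτ, cast_combo] at this
    exact this
  have hu₀ : u ∈ intervalI₀ a := by
    refine mem_I₀_of_ne hzm (fun h => ?_)
    rw [h, hF₂.map_zero] at hcomb
    exact (not_le.mpr (EReal.bot_lt_coe μ)) hcomb
  -- find u₀ with F₂ u₀ equal to the exact combination, via IVT
  have hμmem : ((μ : ℝ) : EReal) ∈ uIcc (F₂ s) (F₂ t) := by
    rw [← hσ, ← hτ]
    rcases le_total σ τ with h | h
    · rw [mem_uIcc]; left
      constructor <;> · rw [EReal.coe_le_coe_iff]; nlinarith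
    · rw [mem_uIcc]; right
      constructor <;> · rw [EReal.coe_le_coe_iff]; nlinarith
  have hsubI : uIcc s t ⊆ intervalI₀ a := uIcc_subset_I₀ hs₀ ht₀
  obtain ⟨u₀, hu₀mem, hu₀F⟩ :=
    intermediate_value_uIcc (hF₂.continuousOn.mono hsubI) hμmem
  have hu₀I : u₀ ∈ intervalI₀ a := hsubI hu₀mem
  have hstar' := hstar s hs₀ t ht₀ u₀ hu₀I lam ⟨hlam0, hlam1⟩ (by
    rw [hu₀F, ← hσ, ← hτ, cast_combo])
  refine hstar'.trans ?_
  -- F₁ u₀ ≤ F₁ u since F₂ u₀ ≤ F₂ u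
  have hle : u₀ ≤ u := by
    by_contra h
    push_neg at h
    have h3 : F₂ u < F₂ u₀ :=
      hF₂.strictMonoOn hzm (I₀_subset_I a hu₀I) h
    rw [hu₀F] at h3
    exact absurd hcomb (not_le.mpr h3)
  rcases eq_or_lt_of_le hle with h | h
  · rw [h]
  · exact (hF₁.strictMonoOn (I₀_subset_I a hu₀I) hzm h).le

/-- Direction B: inclusion over a domain admitting affine functionals with
prescribed values at two points implies the pointwise condition. -/
lemma lemB {E : Type*} [AddCommGroup E] [Module ℝ E] {a : ℝ≥0∞}
    {F₁ F₂ : ℝ → EReal} (hF₁ : IsAdmissible a F₁) (hF₂ : IsAdmissible a F₂)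
    (Ω : Set E) (x y : E) (hx : x ∈ Ω) (hy : y ∈ Ω)
    (haff : ∀ σ τ : ℝ, ∃ ℓ : E → ℝ,
      (∀ x' y' : E, ∀ μ : ℝ, ℓ ((1-μ) • x' + μ • y') = (1-μ) * ℓ x' + μ * ℓ y') ∧
      ℓ x = σ ∧ ℓ y = τ)
    (hsub : CSet a F₂ Ω ⊆ CSet a F₁ Ω) : StarCond a F₁ F₂ := by
  intro s hs t ht u hu lam hlam heq
  obtain ⟨hlam0, hlam1⟩ := hlam
  set σ := (F₂ s).toReal with hσdef
  set τ := (F₂ t).toReal with hτdef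
  have hσ : (σ : EReal) = F₂ s := EReal.coe_toReal (F_ne_top hF₂ hs) (F_ne_bot hF₂ hs)
  have hτ : (τ : EReal) = F₂ t := EReal.coe_toReal (F_ne_top hF₂ ht) (F_ne_bot hF₂ ht)
  set μ := (1 - lam) * σ + lam * τ with hμdef
  have hFu : F₂ u = ((μ : ℝ) : EReal) := by rw [heq, ← hσ, ← hτ, cast_combo]
  set c : ℝ := max σ τ with hcdef
  -- the point realizing the value c
  set v₁ : ℝ := max s t with hv₁def
  have hv₁I : v₁ ∈ intervalI₀ a := by
    rcases le_total s t with h | h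
    · rw [hv₁def, max_eq_right h]; exact ht
    · rw [hv₁def, max_eq_left h]; exact hs
  have hv₁F : F₂ v₁ = ((c : ℝ) : EReal) := by
    rcases le_total s t with h | h
    · have hst : F₂ s ≤ F₂ t :=
        (hF₂.strictMonoOn.monotoneOn) (I₀_subset_I a hs) (I₀_subset_I a ht) h
      rw [← hσ, ← hτ, EReal.coe_le_coe_iff] at hst
      rw [hv₁def, max_eq_right h, hcdef, max_eq_right hst, hτ]
    · have hst : F₂ t ≤ F₂ s :=
        (hF₂.strictMonoOn.monotoneOn) (I₀_subset_I a ht) (I₀_subset_I a hs) h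
      rw [← hσ, ← hτ, EReal.coe_le_coe_iff] at hst
      rw [hv₁def, max_eq_left h, hcdef, max_eq_left hst, hσ]
  -- the partial inverse
  classical
  set P : ℝ → Prop := fun w => ∃ v, v ∈ intervalI₀ a ∧ F₂ v = ((min w c : ℝ) : EReal)
    with hPdef
  set g : ℝ → ℝ := fun w => if h : P w then h.choose else 0 with hgdef
  have hgP : ∀ w, (h : P w) → g w ∈ intervalI₀ a ∧ F₂ (g w) = ((min w c : ℝ) : EReal) := by
    intro w h
    rw [hgdef]
    simp only [dif_pos h]
    exact h.choose_spec
  have hgbot : ∀ w, ¬ P w → F₂ (g w) = ⊥ := by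
    intro w h
    rw [hgdef]
    simp only [dif_neg h]
    exact hF₂.map_zero
  have hgmem : ∀ w, g w ∈ intervalI a := by
    intro w
    by_cases h : P w
    · exact I₀_subset_I a (hgP w h).1
    · rw [hgdef]; simp only [dif_neg h]
      exact zero_mem_I (a_pos_of_mem hs)
  have hguniq : ∀ w v, v ∈ intervalI₀ a → F₂ v = ((min w c : ℝ) : EReal) → g w = v := by
    intro w v hv hvF
    have hP : P w := ⟨v, hv, hvF⟩
    have h1 := hgP w hP
    exact hF₂.strictMonoOn.injOn (I₀_subset_I a h1.1) (I₀_subset_I a hv)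
      (h1.2.trans hvF.symm)
  -- the IVT closure property
  have hkey : ∀ w : ℝ, ∀ v₀, v₀ ∈ intervalI₀ a → F₂ v₀ ≤ ((min w c : ℝ) : EReal) → P w := by
    intro w v₀ hv₀ hle
    have hsub' : uIcc v₀ v₁ ⊆ intervalI₀ a := uIcc_subset_I₀ hv₀ hv₁I
    have hmem : ((min w c : ℝ) : EReal) ∈ uIcc (F₂ v₀) (F₂ v₁) := by
      rw [mem_uIcc]; left
      refine ⟨hle, ?_⟩
      rw [hv₁F, EReal.coe_le_coe_iff]
      exact min_le_right _ _
    obtain ⟨v, hvmem, hvF⟩ :=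
      intermediate_value_uIcc (hF₂.continuousOn.mono hsub') hmem
    exact ⟨v, hsub' hvmem, hvF⟩
  -- the affine functional
  obtain ⟨ℓ, hℓaff, hℓx, hℓy⟩ := haff σ τ
  set f : E → ℝ := fun q => g (ℓ q) with hfdef
  -- f is F₂-concave on Ω
  have hfC : f ∈ CSet a F₂ Ω := by
    refine ⟨fun q _ => hgmem (ℓ q), ?_⟩
    intro x' hx' y' hy' lam' hlam'
    obtain ⟨hl0, hl1⟩ := hlam'
    rw [hfdef]
    simp only
    rw [hℓaff x' y' lam']
    set wx := ℓ x' with hwx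
    set wy := ℓ y' with hwy
    by_cases hPx : P wx
    case neg =>
      rw [hgbot wx hPx, EReal.mul_bot_of_pos (by exact_mod_cast (by linarith : (0:ℝ) < 1 - lam')),
        EReal.bot_add]
      exact bot_le
    by_cases hPy : P wy
    case neg =>
      rw [hgbot wy hPy, EReal.mul_bot_of_pos (by exact_mod_cast hl0), EReal.add_bot]
      exact bot_le
    have hx2 := hgP wx hPx
    have hy2 := hgP wy hPy
    set mx := min wx c with hmx
    set my := min wy c with hmy
    have hR1 : (1 - lam') * mx + lam' * my ≤ min ((1-lam') * wx + lam' * wy) c := by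
      have h1 : mx ≤ wx := min_le_left _ _
      have h2 : my ≤ wy := min_le_left _ _
      have h3 : mx ≤ c := min_le_right _ _
      have h4 : my ≤ c := min_le_right _ _
      refine le_min (by nlinarith) (by nlinarith)
    have hPz : P ((1-lam') * wx + lam' * wy) := by
      rcases le_total mx my with h | h
      · refine hkey _ (g wx) hx2.1 ?_
        rw [hx2.2, EReal.coe_le_coe_iff]
        refine le_trans ?_ hR1
        nlinarith
      · refine hkey _ (g wy) hy2.1 ?_
        rw [hy2.2, EReal.coe_le_coe_iff]
        refine le_trans ?_ hR1
        nlinarith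
    have hz2 := hgP _ hPz
    rw [hx2.2, hy2.2, hz2.2, cast_combo, EReal.coe_le_coe_iff]
    exact hR1
  -- transfer to F₁ and evaluate
  have hfC1 := hsub hfC
  have hconc := hfC1.2 x hx y hy lam ⟨hlam0, hlam1⟩
  have hfx : f x = s := by
    rw [hfdef]
    refine hguniq _ s hs ?_
    rw [hℓx, min_eq_left (le_max_left σ τ), hσ]
  have hfy : f y = t := by
    rw [hfdef]
    refine hguniq _ t ht ?_
    rw [hℓy, min_eq_left (le_max_right σ τ), hτ]
  have hfz : f ((1 - lam) • x + lam • y) = u := by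
    rw [hfdef]
    simp only
    rw [hℓaff x y lam, hℓx, hℓy]
    refine hguniq _ u hu ?_
    have hμc : μ ≤ c := by
      have := le_max_left σ τ
      have := le_max_right σ τ
      rw [hμdef]; nlinarith
    rw [min_eq_left hμc]
    exact hFu
  rw [hfx, hfy, hfz] at hconc
  exact hconc


/-- the hierarchy of `F`-concavities is independent of the convex
domain `Ω` and of the dimension `n`: inclusion (resp. strict inclusion) of
`C_Ω[F₂]` in `C_Ω[F₁]` is equivalent to the corresponding inclusion for the
convex domain `ℝ` in `ℝ¹`. -/
theorem stmt2 {n : ℕ} (hn : 1 ≤ n) (a : ℝ≥0∞) (ha : 0 < a)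
    (F₁ F₂ : ℝ → EReal) (hF₁ : IsAdmissible a F₁) (hF₂ : IsAdmissible a F₂)
    (Ω : Set (EuclideanSpace ℝ (Fin n)))
    (hΩconv : Convex ℝ Ω) (hΩopen : IsOpen Ω) (hΩne : Ω.Nonempty) :
    (CSet a F₂ Ω ⊆ CSet a F₁ Ω ↔
      CSet a F₂ (univ : Set ℝ) ⊆ CSet a F₁ (univ : Set ℝ)) ∧
    (CSet a F₂ Ω ⊂ CSet a F₁ Ω ↔
      CSet a F₂ (univ : Set ℝ) ⊂ CSet a F₁ (univ : Set ℝ)) := by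
  -- affine functionals on ℝ
  have haffR : ∀ σ τ : ℝ, ∃ ℓ : ℝ → ℝ,
      (∀ x' y' : ℝ, ∀ μ : ℝ, ℓ ((1-μ) • x' + μ • y') = (1-μ) * ℓ x' + μ * ℓ y') ∧
      ℓ (0:ℝ) = σ ∧ ℓ (1:ℝ) = τ := by
    intro σ τ
    refine ⟨fun q => σ + (τ - σ) * q, ?_, by ring, by ring⟩
    intro x' y' μ
    simp only [smul_eq_mul]
    ring
  -- affine functionals on the Euclidean space
  obtain ⟨p, hp⟩ := hΩne
  obtain ⟨r, hr, hball⟩ := Metric.isOpen_iff.mp hΩopen p hp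
  set i0 : Fin n := ⟨0, hn⟩ with hi0
  set e : EuclideanSpace ℝ (Fin n) := EuclideanSpace.single i0 (1:ℝ) with he
  set x : EuclideanSpace ℝ (Fin n) := p - (r/2) • e with hxdef
  set y : EuclideanSpace ℝ (Fin n) := p + (r/2) • e with hydef
  have hnorm : ‖(r/2) • e‖ = r / 2 := by
    rw [norm_smul, he, EuclideanSpace.norm_single, norm_one, mul_one,
      Real.norm_eq_abs, abs_of_pos (by linarith : (0:ℝ) < r / 2)]
  have hx : x ∈ Ω := by
    refine hball ?_
    rw [Metric.mem_ball, dist_eq_norm, hxdef]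
    have : p - (r/2) • e - p = -((r/2) • e) := by abel
    rw [this, norm_neg, hnorm]
    linarith
  have hy : y ∈ Ω := by
    refine hball ?_
    rw [Metric.mem_ball, dist_eq_norm, hydef]
    have : p + (r/2) • e - p = (r/2) • e := by abel
    rw [this, hnorm]
    linarith
  have hei0 : e i0 = 1 := by
    rw [he, EuclideanSpace.single_apply, if_pos rfl]
  have hyx : y i0 - x i0 = r := by
    rw [hxdef, hydef]
    simp only [PiLp.add_apply, PiLp.sub_apply, PiLp.smul_apply, smul_eq_mul, hei0]
    ring
  have haffE : ∀ σ τ : ℝ, ∃ ℓ : EuclideanSpace ℝ (Fin n) → ℝ,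
      (∀ x' y' : EuclideanSpace ℝ (Fin n), ∀ μ : ℝ,
        ℓ ((1-μ) • x' + μ • y') = (1-μ) * ℓ x' + μ * ℓ y') ∧
      ℓ x = σ ∧ ℓ y = τ := by
    intro σ τ
    refine ⟨fun q => σ + ((τ - σ)/r) * (q i0 - x i0), ?_, by ring, ?_⟩
    · intro x' y' μ
      simp only [PiLp.add_apply, PiLp.smul_apply, smul_eq_mul]
      ring
    · show σ + ((τ - σ)/r) * (y i0 - x i0) = τ
      rw [hyx]
      field_simp
      ring
  -- the four equivalences
  have hE1 : CSet a F₂ Ω ⊆ CSet a F₁ Ω ↔ StarCond a F₁ F₂ :=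
    ⟨fun h => lemB hF₁ hF₂ Ω x y hx hy haffE h, fun h => lemA hF₁ hF₂ h Ω hΩconv⟩
  have hE1' : CSet a F₁ Ω ⊆ CSet a F₂ Ω ↔ StarCond a F₂ F₁ :=
    ⟨fun h => lemB hF₂ hF₁ Ω x y hx hy haffE h, fun h => lemA hF₂ hF₁ h Ω hΩconv⟩
  have hE2 : CSet a F₂ (univ : Set ℝ) ⊆ CSet a F₁ (univ : Set ℝ) ↔ StarCond a F₁ F₂ :=
    ⟨fun h => lemB hF₁ hF₂ univ 0 1 (mem_univ _) (mem_univ _) haffR h,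
     fun h => lemA hF₁ hF₂ h univ convex_univ⟩
  have hE2' : CSet a F₁ (univ : Set ℝ) ⊆ CSet a F₂ (univ : Set ℝ) ↔ StarCond a F₂ F₁ :=
    ⟨fun h => lemB hF₂ hF₁ univ 0 1 (mem_univ _) (mem_univ _) haffR h,
     fun h => lemA hF₂ hF₁ h univ convex_univ⟩
  constructor
  · exact hE1.trans hE2.symm
  · rw [ssubset_iff_subset_not_subset, ssubset_iff_subset_not_subset, hE1, hE1', hE2, hE2']


end
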